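/- For integers n ≥ 2 and t ≥ 1: γ_R(S(K_n,t)) ≤ (2n^t + n − 1)/(n+1) if t is even, and γ_R(S(K_n,t)) ≤ 2(n^t + 1)/(n+1) if t is odd. -/

import Mathlib

variable {V : Type*}

/-- A Roman dominating function: every vertex with value 0 has a neighbor with value 2. -/
def IsRDF (G : SimpleGraph V) (f : V → Fin 3) : Prop :=
  ∀ v, f v = 0 → ∃ u, G.Adj u v ∧ f u = 2

/-- The weight of a Roman dominating function. -/
def romanWeight [Fintype V] (f : V → Fin 3) : ℕ := ∑ v, (f v : ℕ)

/-- The Roman domination number. -/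
noncomputable def gammaR [Fintype V] (G : SimpleGraph V) : ℕ :=
  sInf {k | ∃ f : V → Fin 3, IsRDF G f ∧ romanWeight f = k}

/-- A dominating set. -/
def IsDomSet (G : SimpleGraph V) (D : Set V) : Prop :=
  ∀ v, v ∈ D ∨ ∃ u ∈ D, G.Adj u v

/-- The domination number. -/
noncomputable def gamma [Fintype V] (G : SimpleGraph V) : ℕ :=
  sInf {k | ∃ D : Set V, IsDomSet G D ∧ D.ncard = k}

/-- The generalized Sierpiński graph `S(G,t)` on words of length `t` over `V`. -/
def sierpinski (G : SimpleGraph V) (t : ℕ) : SimpleGraph (Fin t → V) where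
  Adj x y := ∃ i : Fin t, (∀ j, j < i → x j = y j) ∧ G.Adj (x i) (y i) ∧
    (∀ j, i < j → x j = y i ∧ y j = x i)
  symm := by
    constructor
    rintro x y ⟨i, h1, h2, h3⟩
    exact ⟨i, fun j hj => (h1 j hj).symm, h2.symm, fun j hj => ⟨(h3 j hj).2, (h3 j hj).1⟩⟩
  loopless := by
    constructor
    rintro x ⟨i, -, h2, -⟩
    exact G.loopless.irrefl _ h2

/-! ### Auxiliary material: an automaton describing a near-perfect code in `S(K_n, t)` -/

inductive St (W : Type*) where
  | A : W → St W
  | Ds : W → St W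
  | C : St W
  | B : St W
deriving DecidableEq

section Automaton

variable {W : Type*} [DecidableEq W]

def delta : St W → W → St W
  | .A s, a => if a = s then .C else .Ds s
  | .C, a => .A a
  | .Ds s, a => if a = s then .B else .A s
  | .B, a => .Ds a

def acc : St W → List W → Prop
  | σ, [] => σ = .B
  | σ, a :: l => acc (delta σ a) l

lemma accB_even : ∀ (k : ℕ) (c : W), acc St.B (List.replicate (2*k) c) := by
  intro k
  induction k with
  | zero => intro c; simp [acc]
  | succ k ih =>
    intro c
    have h : 2*(k+1) = (2*k) + 1 + 1 := by ring
    rw [h, List.replicate_succ, List.replicate_succ]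
    show acc (delta (delta St.B c) c) _
    simp only [delta, if_pos rfl]
    exact ih c

lemma accA_rep : ∀ (k : ℕ) (s : W), ¬ acc (St.A s) (List.replicate (2*k) s) := by
  intro k
  induction k with
  | zero => intro s h; simp [acc] at h
  | succ k ih =>
    intro s h
    have he : 2*(k+1) = (2*k) + 1 + 1 := by ring
    rw [he, List.replicate_succ, List.replicate_succ] at h
    have : acc (delta (delta (St.A s) s) s) (List.replicate (2*k) s) := h
    simp only [delta, if_pos rfl] at this
    exact ih s this

inductive Step : List W → List W → Prop
  | here {a b : W} (L : ℕ) (h : a ≠ b) : Step (a :: List.replicate L b) (b :: List.replicate L a)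
  | cons (c : W) {l m : List W} (h : Step l m) : Step (c :: l) (c :: m)

lemma main_even : ∀ (k : ℕ) (l : List W), l.length = 2*k →
    (∀ s : W, ¬ acc (St.A s) l → l ≠ List.replicate (2*k) s →
      ∃ m, Step l m ∧ acc (St.A s) m) ∧
    (¬ acc St.B l → ∃ m, Step l m ∧ acc St.B m) := by
  intro k
  induction k with
  | zero =>
    intro l hl
    have hl0 : l = [] := List.length_eq_zero_iff.mp (by omega)
    subst hl0
    constructor
    · intro s _ h2; exact absurd (by simp) h2
    · intro h; exact absurd rfl h
  | succ k ih =>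
    intro l hl
    rcases l with _ | ⟨a, _ | ⟨b, r⟩⟩
    · simp at hl
    · simp at hl; omega
    have hr : r.length = 2*k := by simp at hl; omega
    have h2 : 2*(k+1) = 2*k+1+1 := by ring
    constructor
    · intro s hacc hne
      have hacc' : ¬ acc (delta (delta (St.A s) a) b) r := hacc
      by_cases ha : a = s
      · subst ha
        simp only [delta, if_pos rfl] at hacc'
        by_cases hrb : r = List.replicate (2*k) b
        · -- hard case 1
          have hbs : b ≠ a := by
            intro h; subst h
            apply hne
            rw [h2, List.replicate_succ, List.replicate_succ, hrb]
          refine ⟨b :: List.replicate (2*k+1) a, ?_, ?_⟩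
          · have : a :: b :: r = a :: List.replicate (2*k+1) b := by
              rw [List.replicate_succ, hrb]
            rw [this]
            exact Step.here _ (Ne.symm hbs)
          · show acc (delta (St.A a) b) _
            simp only [delta, if_neg hbs]
            rw [List.replicate_succ]
            show acc (delta (St.Ds a) a) _
            simp only [delta, if_pos rfl]
            exact accB_even k a
        · obtain ⟨m, hm, haccm⟩ := (ih r hr).1 b hacc' hrb
          refine ⟨a :: b :: m, Step.cons _ (Step.cons _ hm), ?_⟩
          show acc (delta (delta (St.A a) a) b) m
          simpa [delta] using haccm
      · simp only [delta, if_neg ha] at hacc'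
        by_cases hb : b = s
        · subst hb
          simp only [delta, if_pos rfl] at hacc'
          obtain ⟨m, hm, haccm⟩ := (ih r hr).2 hacc'
          refine ⟨a :: b :: m, Step.cons _ (Step.cons _ hm), ?_⟩
          show acc (delta (delta (St.A b) a) b) m
          simpa [delta, ha] using haccm
        · simp only [delta, if_neg hb] at hacc'
          by_cases hrs : r = List.replicate (2*k) s
          · -- hard case 3
            refine ⟨a :: s :: List.replicate (2*k) b, ?_, ?_⟩
            · refine Step.cons a ?_
              rw [hrs]
              exact Step.here _ hb
            · show acc (delta (delta (St.A s) a) s) _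
              simp only [delta, if_neg ha, if_pos rfl]
              exact accB_even k b
          · obtain ⟨m, hm, haccm⟩ := (ih r hr).1 s hacc' hrs
            refine ⟨a :: b :: m, Step.cons _ (Step.cons _ hm), ?_⟩
            show acc (delta (delta (St.A s) a) b) m
            simpa [delta, ha, hb] using haccm
    · intro hacc
      have hacc' : ¬ acc (delta (delta St.B a) b) r := hacc
      by_cases hb : b = a
      · subst hb
        simp only [delta, if_pos rfl] at hacc'
        obtain ⟨m, hm, haccm⟩ := (ih r hr).2 hacc'
        refine ⟨b :: b :: m, Step.cons _ (Step.cons _ hm), ?_⟩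
        show acc (delta (delta St.B b) b) m
        simpa [delta] using haccm
      · simp only [delta, if_neg hb] at hacc'
        by_cases hra : r = List.replicate (2*k) a
        · -- hard case 4
          refine ⟨a :: a :: List.replicate (2*k) b, ?_, ?_⟩
          · refine Step.cons a ?_
            rw [hra]
            exact Step.here _ hb
          · show acc (delta (delta St.B a) a) _
            simp only [delta, if_pos rfl]
            exact accB_even k b
        · obtain ⟨m, hm, haccm⟩ := (ih r hr).1 a hacc' hra
          refine ⟨a :: b :: m, Step.cons _ (Step.cons _ hm), ?_⟩
          show acc (delta (delta St.B a) b) m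
          simpa [delta, hb] using haccm

lemma main_odd : ∀ (k : ℕ) (z : W) (l : List W), l.length = 2*k+1 →
    ¬ acc (St.Ds z) l → ∃ m, Step l m ∧ acc (St.Ds z) m := by
  intro k z l hl hacc
  rcases l with _ | ⟨a, r⟩
  · simp at hl
  have hr : r.length = 2*k := by simp at hl; omega
  have hacc' : ¬ acc (delta (St.Ds z) a) r := hacc
  by_cases ha : a = z
  · subst ha
    simp only [delta, if_pos rfl] at hacc'
    obtain ⟨m, hm, haccm⟩ := (main_even k r hr).2 hacc'
    refine ⟨a :: m, Step.cons _ hm, ?_⟩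
    show acc (delta (St.Ds a) a) m
    simpa [delta] using haccm
  · simp only [delta, if_neg ha] at hacc'
    by_cases hrz : r = List.replicate (2*k) z
    · refine ⟨z :: List.replicate (2*k) a, ?_, ?_⟩
      · rw [hrz]; exact Step.here _ ha
      · show acc (delta (St.Ds z) z) _
        simp only [delta, if_pos rfl]
        exact accB_even k a
    · obtain ⟨m, hm, haccm⟩ := (main_even k r hr).1 z hacc' hrz
      refine ⟨a :: m, Step.cons _ hm, ?_⟩
      show acc (delta (St.Ds z) a) m
      simpa [delta, ha] using haccm

lemma adj_of_step :
    ∀ {l m : List W}, Step l m → ∀ {t : ℕ} (x : Fin t → W), List.ofFn x = l →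
      ∃ y : Fin t → W, List.ofFn y = m ∧ (sierpinski (SimpleGraph.completeGraph W) t).Adj y x := by
  intro l m h
  induction h with
  | @here a b L hne =>
    intro t x hx
    have ht : t = L + 1 := by
      have := congrArg List.length hx; simpa using this
    subst ht
    have hx' : x = Fin.cons a (fun _ => b) := by
      apply List.ofFn_injective
      rw [hx, List.ofFn_succ]
      simp
    refine ⟨Fin.cons b (fun _ => a), ?_, ?_⟩
    · rw [List.ofFn_succ]; simp
    · refine ⟨0, fun j hj => absurd hj (by simp), ?_, ?_⟩
      · subst hx'; simp [SimpleGraph.completeGraph]; exact Ne.symm hne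
      · intro j hj
        subst hx'
        have hj0 : j ≠ 0 := Fin.pos_iff_ne_zero.mp hj
        obtain ⟨j', rfl⟩ := Fin.eq_succ_of_ne_zero hj0
        simp
  | @cons c l m hstep ih =>
    intro t x hx
    rcases t with _ | t
    · simp at hx
    rw [List.ofFn_succ] at hx
    have hx0 : x 0 = c := by injection hx
    have hxt : List.ofFn (fun i : Fin t => x i.succ) = l := by injection hx
    obtain ⟨y', hy', ⟨i, h1, h2, h3⟩⟩ := ih _ hxt
    refine ⟨Fin.cons (x 0) y', ?_, ⟨i.succ, ?_, ?_, ?_⟩⟩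
    · rw [List.ofFn_succ]
      simp [hy', hx0]
    · intro j hj
      rcases Fin.eq_zero_or_eq_succ j with rfl | ⟨j', rfl⟩
      · simp
      · have : j' < i := by
          rwa [Fin.succ_lt_succ_iff] at hj
        simpa using h1 j' this
    · simpa using h2
    · intro j hj
      rcases Fin.eq_zero_or_eq_succ j with rfl | ⟨j', rfl⟩
      · exact absurd hj (by simp [Fin.lt_iff_val_lt_val])
      · have : i < j' := by rwa [Fin.succ_lt_succ_iff] at hj
        simpa using h3 j' this

end Automaton

/-! ### Counting accepted words -/

open Classical in
noncomputable def cnt (n : ℕ) (σ : St (Fin n)) (t : ℕ) : ℕ :=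
  ∑ x : Fin t → Fin n, if acc σ (List.ofFn x) then 1 else 0

lemma cnt_zero (n : ℕ) (σ : St (Fin n)) : cnt n σ 0 = if σ = St.B then 1 else 0 := by
  classical
  rw [cnt]
  rw [Fintype.sum_unique]
  simp [acc, List.ofFn_zero]

lemma cnt_succ (n : ℕ) (σ : St (Fin n)) (t : ℕ) :
    cnt n σ (t+1) = ∑ a : Fin n, cnt n (delta σ a) t := by
  classical
  rw [cnt]
  rw [Fintype.sum_equiv (Fin.consEquiv (fun _ => Fin n)).symm
    _ (fun p => if acc σ (p.1 :: List.ofFn p.2) then 1 else 0)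
    (fun x => by rw [List.ofFn_succ]; rfl)]
  rw [Fintype.sum_prod_type]
  rfl

lemma sum_ite_fin (n : ℕ) (s : Fin n) (X Y : ℕ) :
    ∑ a : Fin n, (if a = s then X else Y) = X + (n-1)*Y := by
  classical
  rw [Finset.sum_ite, Finset.sum_const, Finset.sum_const]
  rw [Finset.filter_eq', if_pos (Finset.mem_univ s)]
  have : Finset.filter (fun a => ¬ a = s) Finset.univ = Finset.univ.erase s := by
    ext a; simp [Finset.mem_erase, and_comm]
  rw [this, Finset.card_erase_of_mem (Finset.mem_univ s)]
  simp [mul_comm]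

lemma cnt_closed (n : ℕ) (hn : 2 ≤ n) : ∀ k : ℕ,
    (∀ s, (n+1) * cnt n (St.A s) (2*k) + 1 = n^(2*k)) ∧
    ((n+1) * cnt n St.B (2*k) = n^(2*k) + n) := by
  intro k
  induction k with
  | zero =>
    constructor
    · intro s; rw [Nat.mul_zero, cnt_zero]; simp
    · rw [Nat.mul_zero, cnt_zero]; simp; omega
  | succ k ih =>
    obtain ⟨ihA, ihB⟩ := ih
    have hDs : ∀ z : Fin n, (n+1) * cnt n (St.Ds z) (2*k+1) = n^(2*k+1) + 1 := by
      intro z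
      have h1 : cnt n (St.Ds z) (2*k+1) = cnt n St.B (2*k) + (n-1) * cnt n (St.A z) (2*k) := by
        rw [cnt_succ]
        rw [show (∑ a : Fin n, cnt n (delta (St.Ds z) a) (2*k)) =
          ∑ a : Fin n, (if a = z then cnt n St.B (2*k) else cnt n (St.A z) (2*k)) from
          Finset.sum_congr rfl (fun a _ => by by_cases h : a = z <;> simp [delta, h])]
        exact sum_ite_fin n z _ _
      have h2 := ihA z
      have h3 : (n+1) * ((n-1) * cnt n (St.A z) (2*k)) + (n-1) = (n-1) * n^(2*k) := by
        rw [← h2]; ring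
      have : (n+1) * cnt n (St.Ds z) (2*k+1) + (n-1)
          = n^(2*k) + n + (n-1) * n^(2*k) := by
        rw [h1, Nat.mul_add, ihB]; omega
      have hp : (n-1) * n^(2*k) + n^(2*k) = n^(2*k+1) := by
        have : (n-1) * n^(2*k) + n^(2*k) = ((n-1)+1) * n^(2*k) := by ring
        rw [this, show n-1+1 = n by omega, pow_succ, mul_comm]
      omega
    have hC : (n+1) * cnt n St.C (2*k+1) + n = n^(2*k+1) := by
      have h1 : cnt n St.C (2*k+1) = ∑ a : Fin n, cnt n (St.A a) (2*k) := by
        rw [cnt_succ]; rfl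
      have h2 : (n+1) * cnt n St.C (2*k+1) + n
          = ∑ a : Fin n, ((n+1) * cnt n (St.A a) (2*k) + 1) := by
        rw [h1, Finset.mul_sum, Finset.sum_add_distrib]
        simp [Finset.card_univ]
      rw [h2, Finset.sum_congr rfl (fun a _ => ihA a)]
      simp [Finset.card_univ, pow_succ, mul_comm]
    constructor
    · intro s
      have h1 : cnt n (St.A s) (2*(k+1)) = cnt n St.C (2*k+1) + (n-1) * cnt n (St.Ds s) (2*k+1) := by
        rw [show 2*(k+1) = (2*k+1)+1 by ring, cnt_succ]
        rw [show (∑ a : Fin n, cnt n (delta (St.A s) a) (2*k+1)) =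
          ∑ a : Fin n, (if a = s then cnt n St.C (2*k+1) else cnt n (St.Ds s) (2*k+1)) from
          Finset.sum_congr rfl (fun a _ => by by_cases h : a = s <;> simp [delta, h])]
        exact sum_ite_fin n s _ _
      have h3 : (n+1) * ((n-1) * cnt n (St.Ds s) (2*k+1)) = (n-1) * (n^(2*k+1) + 1) := by
        rw [← hDs s]; ring
      have h4 : (n-1) * (n^(2*k+1)+1) + (n^(2*k+1)+1) = n * n^(2*k+1) + n := by
        have : (n-1) * (n^(2*k+1)+1) + (n^(2*k+1)+1) = ((n-1)+1) * (n^(2*k+1)+1) := by ring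
        rw [this, show n-1+1 = n by omega]; ring
      have h5 : n * n^(2*k+1) = n^(2*(k+1)) := by ring
      have : (n+1) * cnt n (St.A s) (2*(k+1)) = (n+1) * cnt n St.C (2*k+1)
          + (n+1) * ((n-1) * cnt n (St.Ds s) (2*k+1)) := by rw [h1]; ring
      omega
    · have h1 : cnt n St.B (2*(k+1)) = ∑ a : Fin n, cnt n (St.Ds a) (2*k+1) := by
        rw [show 2*(k+1) = (2*k+1)+1 by ring, cnt_succ]; rfl
      have h2 : (n+1) * cnt n St.B (2*(k+1)) = ∑ a : Fin n, ((n+1) * cnt n (St.Ds a) (2*k+1)) := by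
        rw [h1, Finset.mul_sum]
      rw [h2, Finset.sum_congr rfl (fun a _ => hDs a)]
      rw [Finset.sum_const, Finset.card_univ, Fintype.card_fin, smul_eq_mul]
      have h5 : n * (n^(2*k+1) + 1) = n^(2*(k+1)) + n := by ring
      omega

lemma cnt_Ds_closed (n : ℕ) (hn : 2 ≤ n) (k : ℕ) (z : Fin n) :
    (n+1) * cnt n (St.Ds z) (2*k+1) = n^(2*k+1) + 1 := by
  obtain ⟨ihA, ihB⟩ := cnt_closed n hn k
  have h1 : cnt n (St.Ds z) (2*k+1) = cnt n St.B (2*k) + (n-1) * cnt n (St.A z) (2*k) := by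
    rw [cnt_succ]
    rw [show (∑ a : Fin n, cnt n (delta (St.Ds z) a) (2*k)) =
      ∑ a : Fin n, (if a = z then cnt n St.B (2*k) else cnt n (St.A z) (2*k)) from
      Finset.sum_congr rfl (fun a _ => by by_cases h : a = z <;> simp [delta, h]), sum_ite_fin]
  have h2 := ihA z
  have h3 : (n+1) * ((n-1) * cnt n (St.A z) (2*k)) + (n-1) = (n-1) * n^(2*k) := by
    rw [← h2]; ring
  have h4 : (n+1) * cnt n (St.Ds z) (2*k+1) + (n-1)
      = n^(2*k) + n + (n-1) * n^(2*k) := by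
    rw [h1, Nat.mul_add, ihB]; omega
  have hp : (n-1) * n^(2*k) + n^(2*k) = n^(2*k+1) := by
    have : (n-1) * n^(2*k) + n^(2*k) = ((n-1)+1) * n^(2*k) := by ring
    rw [this, show n-1+1 = n by omega, pow_succ, mul_comm]
  omega

/-! ### The Roman dominating functions -/

open Classical in
noncomputable def fEv (n : ℕ) (z : Fin n) (t : ℕ) (x : Fin t → Fin n) : Fin 3 :=
  if acc (St.A z) (List.ofFn x) then 2 else if x = (fun _ => z) then 1 else 0

open Classical in
noncomputable def fOd (n : ℕ) (z : Fin n) (t : ℕ) (x : Fin t → Fin n) : Fin 3 :=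
  if acc (St.Ds z) (List.ofFn x) then 2 else 0

lemma rdf_fEv (n : ℕ) (z : Fin n) (k : ℕ) :
    IsRDF (sierpinski (SimpleGraph.completeGraph (Fin n)) (2*k)) (fEv n z (2*k)) := by
  classical
  intro v hv
  by_cases hacc : acc (St.A z) (List.ofFn v)
  · exfalso; rw [fEv, if_pos hacc] at hv; exact absurd hv (by decide)
  by_cases hz : v = (fun _ => z)
  · exfalso; rw [fEv, if_neg hacc, if_pos hz] at hv; exact absurd hv (by decide)
  have hne : List.ofFn v ≠ List.replicate (2*k) z := by
    intro h
    apply hz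
    apply List.ofFn_injective
    rw [h, List.ofFn_const]
  obtain ⟨m, hstep, haccm⟩ := (main_even k (List.ofFn v) (by simp)).1 z hacc hne
  obtain ⟨y, hy, hadj⟩ := adj_of_step hstep v rfl
  refine ⟨y, hadj, ?_⟩
  rw [fEv, hy, if_pos haccm]

lemma rdf_fOd (n : ℕ) (z : Fin n) (k : ℕ) :
    IsRDF (sierpinski (SimpleGraph.completeGraph (Fin n)) (2*k+1)) (fOd n z (2*k+1)) := by
  classical
  intro v hv
  by_cases hacc : acc (St.Ds z) (List.ofFn v)
  · exfalso; rw [fOd, if_pos hacc] at hv; exact absurd hv (by decide)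
  obtain ⟨m, hstep, haccm⟩ := main_odd k z (List.ofFn v) (by simp) hacc
  obtain ⟨y, hy, hadj⟩ := adj_of_step hstep v rfl
  refine ⟨y, hadj, ?_⟩
  rw [fOd, hy, if_pos haccm]

lemma weight_fEv (n : ℕ) (z : Fin n) (k : ℕ) :
    romanWeight (fEv n z (2*k)) = 2 * cnt n (St.A z) (2*k) + 1 := by
  classical
  have hzacc : ¬ acc (St.A z) (List.ofFn (fun _ : Fin (2*k) => z)) := by
    rw [List.ofFn_const]
    exact accA_rep k z
  rw [romanWeight]
  have hpt : ∀ x : Fin (2*k) → Fin n,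
      ((fEv n z (2*k) x : ℕ))
        = 2 * (if acc (St.A z) (List.ofFn x) then 1 else 0)
          + (if x = (fun _ => z) then 1 else 0) := by
    intro x
    rw [fEv]
    by_cases h1 : acc (St.A z) (List.ofFn x)
    · have h2 : x ≠ (fun _ => z) := by rintro rfl; exact hzacc h1
      simp [h1, h2]
    · by_cases h2 : x = (fun _ => z)
      · subst h2
        have h3 : ¬ acc (St.A z) (List.replicate (2*k) z) := accA_rep k z
        simp [List.ofFn_const, h3]
      · simp [h1, h2]
  rw [Finset.sum_congr rfl (fun x _ => hpt x), Finset.sum_add_distrib, ← Finset.mul_sum]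
  have : (∑ x : Fin (2*k) → Fin n, if x = (fun _ => z) then 1 else 0) = 1 := by
    simp
  rw [this, cnt]

lemma weight_fOd (n : ℕ) (z : Fin n) (t : ℕ) :
    romanWeight (fOd n z t) = 2 * cnt n (St.Ds z) t := by
  classical
  rw [romanWeight]
  have hpt : ∀ x : Fin t → Fin n,
      ((fOd n z t x : ℕ)) = 2 * (if acc (St.Ds z) (List.ofFn x) then 1 else 0) := by
    intro x
    rw [fOd]
    by_cases h1 : acc (St.Ds z) (List.ofFn x) <;> simp [h1]
  rw [Finset.sum_congr rfl (fun x _ => hpt x), ← Finset.mul_sum, cnt]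

theorem stmt17 (n t : ℕ) (hn : 2 ≤ n) (ht : 1 ≤ t) :
    (Even t → (n + 1) * gammaR (sierpinski (SimpleGraph.completeGraph (Fin n)) t) ≤ 2 * n ^ t + n - 1) ∧
    (Odd t → (n + 1) * gammaR (sierpinski (SimpleGraph.completeGraph (Fin n)) t) ≤ 2 * (n ^ t + 1)) := by
  have hz : 0 < n := by omega
  set z : Fin n := ⟨0, hz⟩
  constructor
  · intro hev
    obtain ⟨k, hk⟩ := hev
    have hk2 : t = 2*k := by omega
    subst hk2
    have hmem : romanWeight (fEv n z (2*k)) ∈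
        {m | ∃ f, IsRDF (sierpinski (SimpleGraph.completeGraph (Fin n)) (2*k)) f ∧ romanWeight f = m} :=
      ⟨fEv n z (2*k), rdf_fEv n z k, rfl⟩
    have hle : gammaR (sierpinski (SimpleGraph.completeGraph (Fin n)) (2*k)) ≤ 2 * cnt n (St.A z) (2*k) + 1 := by
      rw [← weight_fEv n z k]
      exact Nat.sInf_le hmem
    have h1 : (n+1) * gammaR (sierpinski (SimpleGraph.completeGraph (Fin n)) (2*k))
        ≤ (n+1) * (2 * cnt n (St.A z) (2*k) + 1) := Nat.mul_le_mul_left _ hle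
    have h2 : (n+1) * (2 * cnt n (St.A z) (2*k) + 1)
        = 2 * ((n+1) * cnt n (St.A z) (2*k)) + (n+1) := by ring
    have h3 := (cnt_closed n hn k).1 z
    omega
  · intro hodd
    obtain ⟨k, hk⟩ := hodd
    subst hk
    have hmem : romanWeight (fOd n z (2*k+1)) ∈
        {m | ∃ f, IsRDF (sierpinski (SimpleGraph.completeGraph (Fin n)) (2*k+1)) f ∧ romanWeight f = m} :=
      ⟨fOd n z (2*k+1), rdf_fOd n z k, rfl⟩
    have hle : gammaR (sierpinski (SimpleGraph.completeGraph (Fin n)) (2*k+1)) ≤ 2 * cnt n (St.Ds z) (2*k+1) := by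
      rw [← weight_fOd n z (2*k+1)]
      exact Nat.sInf_le hmem
    have h1 : (n+1) * gammaR (sierpinski (SimpleGraph.completeGraph (Fin n)) (2*k+1))
        ≤ (n+1) * (2 * cnt n (St.Ds z) (2*k+1)) := Nat.mul_le_mul_left _ hle
    have h2 : (n+1) * (2 * cnt n (St.Ds z) (2*k+1))
        = 2 * ((n+1) * cnt n (St.Ds z) (2*k+1)) := by ring
    have h3 := cnt_Ds_closed n hn k z
    omega
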